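/- Interpolation within 𝒞 with an arbitrary target coordinate: for every f ∈ 𝒞ₙ, every finite set A of tuples in Fin n → ℚ, and every coordinate i : Fin n, there exists g ∈ 𝒞ₙ such that g eventually acts as some order automorphism at coordinate i above some threshold and g u = f u for all u ∈ A. Hence the unique projection-valued clone homomorphism on 𝒞 is not determined by the restriction of a function to any finite set. -/

import Mathlib

/-- `f` preserves `<` (is a polymorphism of `(ℚ, <)`). -/
def PreservesLt {n : ℕ} (f : (Fin n → ℚ) → ℚ) : Prop :=
  ∀ u v : Fin n → ℚ, (∀ j, u j < v j) → f u < f v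

/-- `f` eventually acts as the order automorphism `α` at coordinate `i` above threshold `a`. -/
def EventuallyActsAs {n : ℕ} (f : (Fin n → ℚ) → ℚ) (α : ℚ ≃o ℚ) (i : Fin n) (a : ℚ) : Prop :=
  ∀ u : Fin n → ℚ, (∀ j, a < u j) → f u = α (u i)

/-- The clone `𝒞`: `n`-ary functions preserving `<` that eventually act as some order
automorphism at some coordinate above some threshold. -/
def CloneC (n : ℕ) : Set ((Fin n → ℚ) → ℚ) :=
  {f | PreservesLt f ∧ ∃ (i : Fin n) (a : ℚ) (α : ℚ ≃o ℚ), EventuallyActsAs f α i a}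

theorem interpolation_any_coordinate {n : ℕ} (f : (Fin n → ℚ) → ℚ) (hf : f ∈ CloneC n)
    (A : Finset (Fin n → ℚ)) (i : Fin n) :
    ∃ g : (Fin n → ℚ) → ℚ, g ∈ CloneC n ∧
      (∃ (α : ℚ ≃o ℚ) (a : ℚ), EventuallyActsAs g α i a) ∧
      ∀ u ∈ A, g u = f u := by
  obtain ⟨hpf, i₀, a₀, α, hα⟩ := hf
  obtain ⟨M, hM⟩ := (A.image fun u => f u - α (u i)).exists_le
  set K : ℚ := max 0 M with hK
  have hKnn : (0 : ℚ) ≤ K := le_max_left _ _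
  have hMK : M ≤ K := le_max_right _ _
  obtain ⟨N, hN⟩ := (A.image fun u => α (u i) + K).exists_le
  set a : ℚ := max (α.symm N) (a₀ + 1) with ha
  have haa₀ : a₀ < a := lt_of_lt_of_le (lt_add_one a₀) (le_max_right _ _)
  have haN : N ≤ α a := by
    calc N = α (α.symm N) := (α.apply_symm_apply N).symm
    _ ≤ α a := α.le_iff_le.mpr (le_max_left _ _)
  set g : (Fin n → ℚ) → ℚ :=
    fun u => min (α (u i) + K) (f u + max 0 (α (u i) + K - α a)) with hg
  set β : ℚ ≃o ℚ := α.trans (OrderIso.addRight K) with hβ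
  have hβapp : ∀ q, β q = α q + K := fun q => rfl
  have hpres : PreservesLt g := by
    intro u v huv
    simp only [hg]
    apply min_lt_min
    · exact add_lt_add_left (α.lt_iff_lt.mpr (huv i)) K
    · refine add_lt_add_of_lt_of_le (hpf u v huv) ?_
      exact max_le_max le_rfl (by
        have := α.le_iff_le.mpr (le_of_lt (huv i)); linarith)
  have hev : EventuallyActsAs g β i a := by
    intro u hu
    have h1 : ∀ j, a₀ < u j := fun j => haa₀.trans (hu j)
    have hfu := hα u h1
    have hαi : α a < α (u i) := α.lt_iff_lt.mpr (hu i)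
    have hαi₀ : α a < α (u i₀) := α.lt_iff_lt.mpr (hu i₀)
    have hterm : max 0 (α (u i) + K - α a) = α (u i) + K - α a :=
      max_eq_right (by linarith)
    have hle : α (u i) + K ≤ f u + max 0 (α (u i) + K - α a) := by
      rw [hterm, hfu]; linarith
    simp only [hg, hβapp, min_eq_left hle]
  have hagr : ∀ u ∈ A, g u = f u := by
    intro u hu
    have h1 : f u - α (u i) ≤ M := hM _ (Finset.mem_image_of_mem _ hu)
    have h2 : α (u i) + K ≤ N := hN _ (Finset.mem_image_of_mem _ hu)
    have hterm : max 0 (α (u i) + K - α a) = 0 := max_eq_left (by linarith)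
    simp only [hg, hterm, add_zero]
    exact min_eq_right (by linarith)
  exact ⟨g, ⟨hpres, i, a, β, hev⟩, ⟨β, a, hev⟩, hagr⟩
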